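/- Let ℓ ≥ 1 and let a₁,…,a_ℓ, b₁,…,b_ℓ be positive integers with A = Σ aᵢ and B = Σ bᵢ. Then Σ aᵢbᵢ ≤ (ℓ - 1) + (A - ℓ + 1)(B - ℓ + 1). -/
import Mathlib

/-- Combinatorial core of the entry-sum lemma: if `ℓ ≥ 1` and
`a₁,…,a_ℓ, b₁,…,b_ℓ` are positive integers with `A = Σ aᵢ` and `B = Σ bᵢ`,
then `Σ aᵢbᵢ ≤ (ℓ - 1) + (A - ℓ + 1)(B - ℓ + 1)`. -/
theorem stmt_13 (ℓ : ℕ) (hℓ : 1 ≤ ℓ) (a b : Fin ℓ → ℕ)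
    (ha : ∀ i, 1 ≤ a i) (hb : ∀ i, 1 ≤ b i) :
    (∑ i, (a i : ℤ) * b i) ≤
      ((ℓ : ℤ) - 1) +
        ((∑ i, (a i : ℤ)) - ℓ + 1) * ((∑ i, (b i : ℤ)) - ℓ + 1) := by
  have hα : ∀ i, (0:ℤ) ≤ (a i : ℤ) - 1 := fun i => by
    have := ha i; omega
  have hβ : ∀ i, (0:ℤ) ≤ (b i : ℤ) - 1 := fun i => by
    have := hb i; omega
  have key : ∑ i, ((a i:ℤ)-1)*((b i:ℤ)-1)
      ≤ (∑ i, ((a i:ℤ)-1)) * (∑ i, ((b i:ℤ)-1)) := by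
    calc ∑ i, ((a i:ℤ)-1)*((b i:ℤ)-1)
        ≤ ∑ i, ((a i:ℤ)-1) * (∑ j, ((b j:ℤ)-1)) := by
          refine Finset.sum_le_sum fun i _ => ?_
          exact mul_le_mul_of_nonneg_left
            (Finset.single_le_sum (fun j _ => hβ j) (Finset.mem_univ i)) (hα i)
      _ = (∑ i, ((a i:ℤ)-1)) * (∑ i, ((b i:ℤ)-1)) := by
          rw [Finset.sum_mul]
  have e1 : ∑ i, ((a i:ℤ)-1) = (∑ i, (a i:ℤ)) - ℓ := by
    rw [Finset.sum_sub_distrib]; simp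
  have e2 : ∑ i, ((b i:ℤ)-1) = (∑ i, (b i:ℤ)) - ℓ := by
    rw [Finset.sum_sub_distrib]; simp
  have e3 : ∑ i, (a i:ℤ)*(b i:ℤ)
      = (∑ i, ((a i:ℤ)-1)*((b i:ℤ)-1)) + (∑ i, (a i:ℤ)) + (∑ i, (b i:ℤ)) - ℓ := by
    rw [← Finset.sum_add_distrib, ← Finset.sum_add_distrib]
    rw [show ((ℓ:ℤ)) = ∑ _i : Fin ℓ, (1:ℤ) by simp]
    rw [← Finset.sum_sub_distrib]
    apply Finset.sum_congr rfl
    intros; ring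
  rw [e1, e2] at key
  linarith [key, e3]
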